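/- If for some t ∈ ℝ every complex zero of Ξ_t is real, then for every t' > t every complex zero of Ξ_{t'} is real. -/

import Mathlib

open Complex Polynomial Finset Filter

noncomputable def Tc (μ : ℕ) (c : ℝ) (Q : Polynomial ℂ) : Polynomial ℂ :=
  Polynomial.C (1 - Complex.I * c * μ) * Q
    + Polynomial.C (Complex.I * c) * (Polynomial.X * Polynomial.derivative Q)

lemma coeff_Tc (μ : ℕ) (c : ℝ) (Q : Polynomial ℂ) (n : ℕ) :
    (Tc μ c Q).coeff n = (1 + Complex.I * c * ((n : ℂ) - μ)) * Q.coeff n := by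
  rw [Tc, coeff_add, coeff_C_mul, coeff_C_mul]
  cases n with
  | zero =>
    rw [mul_coeff_zero, coeff_X_zero]
    push_cast
    ring
  | succ n =>
    rw [coeff_X_mul, coeff_derivative]
    push_cast
    ring

lemma eval_deriv_prod (w : ℂ) (M : Multiset ℂ) (hw : ∀ ρ ∈ M, w ≠ ρ) :
    (Polynomial.derivative (M.map (fun ρ => Polynomial.X - Polynomial.C ρ)).prod).eval w
      = ((M.map (fun ρ => Polynomial.X - Polynomial.C ρ)).prod).eval w
          * (M.map (fun ρ => 1 / (w - ρ))).sum := by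
  induction M using Multiset.induction_on with
  | empty => simp
  | cons ρ M ih =>
    have hρ : w - ρ ≠ 0 := sub_ne_zero.mpr (hw ρ (Multiset.mem_cons_self ρ M))
    have ih' := ih (fun x hx => hw x (Multiset.mem_cons_of_mem hx))
    simp only [Multiset.map_cons, Multiset.prod_cons, Multiset.sum_cons, derivative_mul,
      derivative_sub, derivative_X, derivative_C, sub_zero, one_mul, eval_add, eval_mul,
      eval_sub, eval_X, eval_C, ih']
    field_simp

lemma im_term (c : ℝ) (w ρ : ℂ) (hρ : Complex.normSq ρ = 1) (hne : w ≠ ρ) :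
    (Complex.I * c * (w / (w - ρ))).im
      = c / 2 + c * (Complex.normSq w - 1) / (2 * Complex.normSq (w - ρ)) := by
  have hs : Complex.normSq (w - ρ) ≠ 0 := by
    simpa [Complex.normSq_eq_zero, sub_eq_zero] using hne
  have h1 : (Complex.I * c * (w / (w - ρ))).im = c * (w / (w - ρ)).re := by
    simp [Complex.mul_im, Complex.mul_re]
  have key : w.re * (w - ρ).re + w.im * (w - ρ).im
      = (Complex.normSq (w - ρ) + (Complex.normSq w - 1)) / 2 := by
    simp only [Complex.normSq_apply, Complex.sub_re, Complex.sub_im]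
    simp only [Complex.normSq_apply] at hρ
    linear_combination -hρ / 2
  rw [h1, Complex.div_re, ← add_div, key]
  field_simp

lemma im_msum (c : ℝ) (w : ℂ) (M : Multiset ℂ)
    (hρ : ∀ ρ ∈ M, Complex.normSq ρ = 1) (hne : ∀ ρ ∈ M, w ≠ ρ) :
    ((M.map (fun ρ => Complex.I * c * (w / (w - ρ)))).sum).im
      = c * M.card / 2
        + c * (Complex.normSq w - 1) / 2 * (M.map (fun ρ => 1 / Complex.normSq (w - ρ))).sum := by
  induction M using Multiset.induction_on with
  | empty => simp
  | cons ρ M ih =>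
    have h1 := im_term c w ρ (hρ ρ (Multiset.mem_cons_self ρ M)) (hne ρ (Multiset.mem_cons_self ρ M))
    have hs : Complex.normSq (w - ρ) ≠ 0 := by
      simpa [Complex.normSq_eq_zero, sub_eq_zero] using hne ρ (Multiset.mem_cons_self ρ M)
    have ih' := ih (fun x hx => hρ x (Multiset.mem_cons_of_mem hx))
      (fun x hx => hne x (Multiset.mem_cons_of_mem hx))
    simp only [Multiset.map_cons, Multiset.sum_cons, Complex.add_im, ih', h1,
      Multiset.card_cons]
    push_cast
    field_simp
    ring

lemma msum_pos (w : ℂ) (M : Multiset ℂ) (hM : M ≠ 0) (hne : ∀ ρ ∈ M, w ≠ ρ) :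
    0 < (M.map (fun ρ => 1 / Complex.normSq (w - ρ))).sum := by
  obtain ⟨ρ, hρ⟩ := Multiset.exists_mem_of_ne_zero hM
  have hterm : 0 < 1 / Complex.normSq (w - ρ) := by
    have h0 : 0 < Complex.normSq (w - ρ) :=
      Complex.normSq_pos.mpr (sub_ne_zero.mpr (hne ρ hρ))
    positivity
  refine lt_of_lt_of_le hterm (Multiset.single_le_sum ?_ _ ?_)
  · intro x hx
    obtain ⟨ρ', hρ', rfl⟩ := Multiset.mem_map.mp hx
    have h0 : 0 ≤ Complex.normSq (w - ρ') := Complex.normSq_nonneg _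
    positivity
  · exact Multiset.mem_map_of_mem _ hρ

lemma prod_lb (w : ℂ) (δ : ℝ) (hδ : 0 ≤ δ) (M : Multiset ℂ)
    (h : ∀ ρ ∈ M, δ ≤ ‖w - ρ‖) :
    δ ^ Multiset.card M ≤ (M.map (fun ρ => ‖w - ρ‖)).prod := by
  induction M using Multiset.induction_on with
  | empty => simp
  | cons ρ M ih =>
    have h1 := h ρ (Multiset.mem_cons_self ρ M)
    have ih' := ih (fun x hx => h x (Multiset.mem_cons_of_mem hx))
    simp only [Multiset.map_cons, Multiset.prod_cons, Multiset.card_cons, pow_succ]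
    calc δ ^ Multiset.card M * δ
        ≤ (M.map (fun ρ => ‖w - ρ‖)).prod * ‖w - ρ‖ := by
          apply mul_le_mul ih' h1 hδ
          exact Multiset.prod_nonneg (by
            intro x hx
            obtain ⟨ρ', hρ', rfl⟩ := Multiset.mem_map.mp hx
            exact norm_nonneg _)
      _ = _ := mul_comm _ _

lemma Tc_ne (c : ℝ) (r : ℝ) : (1 : ℂ) + Complex.I * c * (r : ℂ) ≠ 0 := by
  intro h
  have := congrArg Complex.re h
  simp [Complex.add_re, Complex.mul_re, Complex.mul_im] at this

lemma Tc_step (μ : ℕ) (hμ : 1 ≤ μ) (c : ℝ) (Q : Polynomial ℂ)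
    (hdeg : Q.natDegree = 2*μ) (hlead : Q.coeff (2*μ) ≠ 0)
    (hroots : ∀ w : ℂ, Q.eval w = 0 → ‖w‖ = 1) :
    (Tc μ c Q).natDegree = 2*μ ∧ (Tc μ c Q).coeff (2*μ) ≠ 0 ∧
      ∀ w : ℂ, (Tc μ c Q).eval w = 0 → ‖w‖ = 1 := by
  have hcast : ((2*μ : ℕ) : ℂ) - (μ : ℂ) = ((μ : ℝ) : ℂ) := by push_cast; ring
  have hcoeff2μ : (Tc μ c Q).coeff (2*μ) ≠ 0 := by
    rw [coeff_Tc, hcast]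
    exact mul_ne_zero (Tc_ne c μ) hlead
  have hdle : (Tc μ c Q).natDegree ≤ 2*μ := by
    refine natDegree_le_iff_coeff_eq_zero.mpr (fun N hN => ?_)
    rw [coeff_Tc, coeff_eq_zero_of_natDegree_lt (by omega), mul_zero]
  have hdeg' : (Tc μ c Q).natDegree = 2*μ :=
    le_antisymm hdle (le_natDegree_of_ne_zero hcoeff2μ)
  refine ⟨hdeg', hcoeff2μ, fun w hw => ?_⟩
  have heval : (Tc μ c Q).eval w
      = (1 - Complex.I*c*μ) * Q.eval w + Complex.I*c*(w * (derivative Q).eval w) := by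
    simp [Tc]
  rcases eq_or_ne c 0 with rfl | hc
  · apply hroots w
    rw [heval] at hw
    simpa using hw
  by_cases hQw : Q.eval w = 0
  · exact hroots w hQw
  have hQ0 : Q ≠ 0 := fun h0 => hlead (by simp [h0])
  have hsplit : Splits Q := IsAlgClosed.splits Q
  have hfac := hsplit.eq_prod_roots
  have hcard : Multiset.card Q.roots = 2*μ := by
    rw [← hdeg]; exact splits_iff_card_roots.mp hsplit
  have hcirc : ∀ ρ ∈ Q.roots, Complex.normSq ρ = 1 := by
    intro ρ hρ
    have h1 : ‖ρ‖ = 1 := hroots ρ (mem_roots'.mp hρ).2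
    rw [← Complex.sq_norm, h1]; norm_num
  have hne : ∀ ρ ∈ Q.roots, w ≠ ρ := by
    intro ρ hρ hwρ
    exact hQw (by rw [hwρ]; exact (mem_roots'.mp hρ).2)
  set P : Polynomial ℂ := (Q.roots.map fun a => Polynomial.X - Polynomial.C a).prod with hP
  have hevalQ : Q.eval w = Q.leadingCoeff * P.eval w := by
    conv_lhs => rw [hfac]
    simp [eval_mul]
  have hevalQ' : (derivative Q).eval w
      = Q.leadingCoeff * (P.eval w * (Q.roots.map (fun ρ => 1/(w-ρ))).sum) := by
    conv_lhs => rw [hfac]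
    rw [derivative_C_mul]
    rw [eval_mul, eval_deriv_prod w Q.roots hne]
    simp [eval_C]
    exact Or.inl (Or.inl rfl)
  set S : ℂ := (Q.roots.map (fun ρ => Complex.I * c * (w / (w - ρ)))).sum with hS
  have hSalt : S = (Complex.I * c * w) * (Q.roots.map (fun ρ => 1/(w-ρ))).sum := by
    rw [hS, ← Multiset.sum_map_mul_left]
    congr 1
    apply Multiset.map_congr rfl
    intro ρ _
    rw [mul_one_div, mul_div_assoc]
  have hbr : (1 - Complex.I*c*μ) + S = 0 := by
    have h2 : Q.eval w * ((1 - Complex.I*c*μ) + S) = 0 := by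
      rw [← hw, heval, hevalQ', hevalQ, hSalt]
      ring
    rcases mul_eq_zero.mp h2 with h | h
    · exact absurd h hQw
    · exact h
  have him := congrArg Complex.im hbr
  rw [Complex.add_im, hS, im_msum c w Q.roots hcirc hne, hcard, Complex.zero_im] at him
  have h3 : ((1 : ℂ) - Complex.I*(c:ℂ)*(μ:ℂ)).im = -(c*μ) := by
    simp [Complex.sub_im, Complex.mul_im]
  rw [h3] at him
  set T : ℝ := (Q.roots.map (fun ρ => 1 / Complex.normSq (w - ρ))).sum with hT
  have hM0 : Q.roots ≠ 0 := by
    intro h0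
    rw [h0] at hcard
    simp at hcard
    omega
  have hTpos : 0 < T := msum_pos w Q.roots hM0 hne
  have h5 : c * (Complex.normSq w - 1) / 2 * T = 0 := by
    push_cast at him
    linarith
  have h6 : Complex.normSq w = 1 := by
    rcases mul_eq_zero.mp h5 with h | h
    · have h7 : c * (Complex.normSq w - 1) = 0 := by linarith
      rcases mul_eq_zero.mp h7 with h8 | h8
      · exact absurd h8 hc
      · linarith
    · exact absurd h hTpos.ne'
  have h9 : (‖w‖ - 1) * (‖w‖ + 1) = 0 := by
    have := Complex.sq_norm w
    nlinarith
  rcases mul_eq_zero.mp h9 with h | h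
  · linarith
  · nlinarith [norm_nonneg w]

lemma sum_range_symm (μ : ℕ) (f : ℕ → ℂ) :
    ∑ k ∈ Finset.range (2*μ+1), f k
      = f μ + ∑ n ∈ Finset.Icc 1 μ, (f (μ - n) + f (μ + n)) := by
  have h1 : ∑ n ∈ Finset.Icc 1 μ, f (μ - n) = ∑ k ∈ Finset.range μ, f k := by
    apply Finset.sum_nbij' (fun n => μ - n) (fun k => μ - k)
    · intro a ha
      simp only [Finset.mem_Icc] at ha
      simp only [Finset.mem_range]
      omega
    · intro a ha
      simp only [Finset.mem_range] at ha
      simp only [Finset.mem_Icc]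
      omega
    · intro a ha
      simp only [Finset.mem_Icc] at ha
      omega
    · intro a ha
      simp only [Finset.mem_range] at ha
      omega
    · intro a _; rfl
  have h2 : ∑ n ∈ Finset.Icc 1 μ, f (μ + n) = ∑ k ∈ Finset.Icc (μ+1) (2*μ), f k := by
    apply Finset.sum_nbij' (fun n => μ + n) (fun k => k - μ)
    · intro a ha
      simp only [Finset.mem_Icc] at ha ⊢
      omega
    · intro a ha
      simp only [Finset.mem_Icc] at ha ⊢
      omega
    · intro a ha
      simp only [Finset.mem_Icc] at ha
      omega
    · intro a ha
      simp only [Finset.mem_Icc] at ha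
      omega
    · intro a _; rfl
  rw [Finset.sum_add_distrib, h1, h2]
  have h3 : Finset.range (2*μ+1) = Finset.Ico 0 (2*μ+1) := by rw [Finset.range_eq_Ico]
  have h4 : ∑ k ∈ Finset.Ico 0 (μ+1), f k + ∑ k ∈ Finset.Ico (μ+1) (2*μ+1), f k
      = ∑ k ∈ Finset.Ico 0 (2*μ+1), f k :=
    Finset.sum_Ico_consecutive f (by omega) (by omega)
  have h5 : Finset.Icc (μ+1) (2*μ) = Finset.Ico (μ+1) (2*μ+1) := by
    ext x; simp [Finset.mem_Icc, Finset.mem_Ico]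
  have h6 : ∑ k ∈ Finset.Ico 0 (μ+1), f k = ∑ k ∈ Finset.range μ, f k + f μ := by
    rw [← Finset.range_eq_Ico, Finset.sum_range_succ]
  rw [h3, ← h4, h6, h5]
  ring

/-- The deformation `Ξ_t(z) = Φ₀ + ∑_{n=1}^g Φₙ e^{t n²} (e^{inz} + e^{-inz})`. -/
noncomputable def Xi (g : ℕ) (Φ : ℕ → ℝ) (t : ℝ) (z : ℂ) : ℂ :=
  (Φ 0 : ℂ) + ∑ n ∈ Finset.Icc 1 g,
    (Φ n : ℂ) * (Real.exp (t * (n : ℝ) ^ 2) : ℂ) *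
      (Complex.exp ((n : ℂ) * Complex.I * z) + Complex.exp (-((n : ℂ) * Complex.I * z)))

noncomputable def coefA (Φ : ℕ → ℝ) (μ : ℕ) (s : ℝ) (n : ℕ) : ℂ :=
  if n = μ then (Φ 0 : ℂ)
  else ((Φ (((n : ℤ) - μ).natAbs) * Real.exp (s * ((n : ℝ) - μ)^2) : ℝ) : ℂ)

noncomputable def Qp (Φ : ℕ → ℝ) (μ : ℕ) (s : ℝ) : Polynomial ℂ :=
  ∑ n ∈ Finset.range (2*μ+1), Polynomial.C (coefA Φ μ s n) * Polynomial.X ^ n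

lemma coeff_Qp (Φ : ℕ → ℝ) (μ : ℕ) (s : ℝ) (k : ℕ) :
    (Qp Φ μ s).coeff k = if k ≤ 2*μ then coefA Φ μ s k else 0 := by
  rw [Qp, Polynomial.finset_sum_coeff]
  simp only [Polynomial.coeff_C_mul, Polynomial.coeff_X_pow]
  rw [Finset.sum_congr rfl (fun n _ => by rw [mul_ite, mul_one, mul_zero])]
  rw [Finset.sum_ite_eq (Finset.range (2*μ+1)) k (coefA Φ μ s)]
  simp only [Finset.mem_range]
  congr 1
  simp only [eq_iff_iff]
  omega

lemma eval_Qp (Φ : ℕ → ℝ) (μ : ℕ) (s : ℝ) (v : ℂ) :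
    (Qp Φ μ s).eval v = ∑ n ∈ Finset.range (2*μ+1), coefA Φ μ s n * v ^ n := by
  rw [Qp, Polynomial.eval_finset_sum]
  simp

lemma Xi_eq (g μ : ℕ) (hμ1 : 1 ≤ μ) (hμg : μ ≤ g) (Φ : ℕ → ℝ)
    (hhigh : ∀ n, μ < n → n ≤ g → Φ n = 0) (s : ℝ) (z : ℂ) :
    Xi g Φ s z = Complex.exp (-(μ:ℂ) * Complex.I * z) * (Qp Φ μ s).eval (Complex.exp (Complex.I * z)) := by
  rw [eval_Qp, Finset.mul_sum]
  rw [sum_range_symm μ (fun n => Complex.exp (-(μ:ℂ) * Complex.I * z) * (coefA Φ μ s n * Complex.exp (Complex.I * z) ^ n))]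
  have hexp : ∀ n : ℕ, Complex.exp (Complex.I * z) ^ n = Complex.exp ((n : ℂ) * (Complex.I * z)) :=
    fun n => (Complex.exp_nat_mul _ n).symm
  have hmid : Complex.exp (-(μ:ℂ) * Complex.I * z) * (coefA Φ μ s μ * Complex.exp (Complex.I * z) ^ μ)
      = (Φ 0 : ℂ) := by
    rw [hexp, coefA, if_pos rfl,
      show Complex.exp (-(μ:ℂ) * Complex.I * z) * ((Φ 0 : ℂ) * Complex.exp ((μ:ℂ) * (Complex.I * z)))
        = (Complex.exp (-(μ:ℂ) * Complex.I * z) * Complex.exp ((μ:ℂ) * (Complex.I * z))) * (Φ 0 : ℂ) from by ring,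
      ← Complex.exp_add,
      show -(μ:ℂ) * Complex.I * z + (μ:ℂ) * (Complex.I * z) = 0 from by ring,
      Complex.exp_zero, one_mul]
  rw [hmid]
  rw [Xi]
  congr 1
  rw [show ∑ n ∈ Finset.Icc 1 g, (Φ n : ℂ) * (Real.exp (s * (n : ℝ) ^ 2) : ℂ) *
      (Complex.exp ((n : ℂ) * Complex.I * z) + Complex.exp (-((n : ℂ) * Complex.I * z)))
      = ∑ n ∈ Finset.Icc 1 μ, (Φ n : ℂ) * (Real.exp (s * (n : ℝ) ^ 2) : ℂ) *
      (Complex.exp ((n : ℂ) * Complex.I * z) + Complex.exp (-((n : ℂ) * Complex.I * z))) from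
    (Finset.sum_subset (Finset.Icc_subset_Icc_right hμg) (by
      intro x hx hx'
      simp only [Finset.mem_Icc] at hx hx'
      rw [hhigh x (by omega) hx.2]
      simp)).symm]
  apply Finset.sum_congr rfl
  intro n hn
  simp only [Finset.mem_Icc] at hn
  have hsub : ((μ - n : ℕ) : ℤ) = (μ : ℤ) - n := by
    have := hn.2; push_cast [this]; ring
  have hsubR : ((μ - n : ℕ) : ℝ) = (μ : ℝ) - n := by
    have := hn.2; push_cast [this]; ring
  have hsubC : ((μ - n : ℕ) : ℂ) = (μ : ℂ) - n := by
    have := hn.2; push_cast [this]; ring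
  have hA1 : coefA Φ μ s (μ - n) = ((Φ n * Real.exp (s * (n : ℝ)^2) : ℝ) : ℂ) := by
    rw [coefA, if_neg (by omega)]
    rw [show (((μ - n : ℕ) : ℤ) - μ).natAbs = n from by rw [hsub]; simp,
      show (((μ - n : ℕ) : ℝ) - μ)^2 = (n : ℝ)^2 from by rw [hsubR]; ring]
  have hA2 : coefA Φ μ s (μ + n) = ((Φ n * Real.exp (s * (n : ℝ)^2) : ℝ) : ℂ) := by
    rw [coefA, if_neg (by omega)]
    rw [show (((μ + n : ℕ) : ℤ) - μ).natAbs = n from by push_cast; simp,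
      show (((μ + n : ℕ) : ℝ) - μ)^2 = (n : ℝ)^2 from by push_cast; ring]
  have hE1 : Complex.exp (-(μ:ℂ) * Complex.I * z) * Complex.exp (((μ - n : ℕ) : ℂ) * (Complex.I * z))
      = Complex.exp (-((n:ℂ) * Complex.I * z)) := by
    rw [← Complex.exp_add]
    congr 1
    rw [hsubC]; ring
  have hE2 : Complex.exp (-(μ:ℂ) * Complex.I * z) * Complex.exp (((μ + n : ℕ) : ℂ) * (Complex.I * z))
      = Complex.exp ((n:ℂ) * Complex.I * z) := by
    rw [← Complex.exp_add]
    congr 1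
    push_cast; ring
  calc (Φ n : ℂ) * (Real.exp (s * (n : ℝ) ^ 2) : ℂ) *
      (Complex.exp ((n : ℂ) * Complex.I * z) + Complex.exp (-((n : ℂ) * Complex.I * z)))
      = ((Φ n * Real.exp (s * (n : ℝ)^2) : ℝ) : ℂ)
          * (Complex.exp (-(μ:ℂ) * Complex.I * z) * Complex.exp (((μ - n : ℕ) : ℂ) * (Complex.I * z)))
        + ((Φ n * Real.exp (s * (n : ℝ)^2) : ℝ) : ℂ)
          * (Complex.exp (-(μ:ℂ) * Complex.I * z) * Complex.exp (((μ + n : ℕ) : ℂ) * (Complex.I * z))) := by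
        rw [hE1, hE2]
        push_cast
        ring
    _ = _ := by
        rw [hexp, hexp, hA1, hA2]
        ring

lemma abs_msum_prod (M : Multiset ℂ) :
    ‖M.prod‖ = (M.map (‖·‖)).prod := by
  induction M using Multiset.induction_on with
  | empty => simp
  | cons a M ih => simp [Multiset.prod_cons, norm_mul, ih]

lemma coefA_edge (Φ : ℕ → ℝ) (μ : ℕ) (hμ : 1 ≤ μ) (s : ℝ) :
    coefA Φ μ s (2*μ) = ((Φ μ * Real.exp (s * (μ:ℝ)^2) : ℝ) : ℂ)
      ∧ coefA Φ μ s 0 = ((Φ μ * Real.exp (s * (μ:ℝ)^2) : ℝ) : ℂ) := by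
  constructor
  · rw [coefA, if_neg (by omega)]
    rw [show (((2*μ : ℕ) : ℤ) - μ).natAbs = μ from by omega,
      show (((2*μ : ℕ) : ℝ) - μ)^2 = (μ : ℝ)^2 from by push_cast; ring]
  · rw [coefA, if_neg (by omega)]
    rw [show (((0 : ℕ) : ℤ) - μ).natAbs = μ from by omega,
      show (((0 : ℕ) : ℝ) - μ)^2 = (μ : ℝ)^2 from by push_cast; ring]

lemma coefA_shift (Φ : ℕ → ℝ) (μ : ℕ) (t t' : ℝ) (n : ℕ) :
    coefA Φ μ t' n = ((Real.exp ((t' - t) * ((n:ℝ) - μ)^2) : ℝ) : ℂ) * coefA Φ μ t n := by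
  rw [coefA, coefA]
  by_cases hn : n = μ
  · rw [if_pos hn, if_pos hn, hn]
    simp
  · rw [if_neg hn, if_neg hn]
    rw [← Complex.ofReal_mul]
    congr 1
    rw [show Real.exp ((t' - t) * ((n:ℝ) - μ)^2) * (Φ (((n:ℤ) - μ).natAbs) * Real.exp (t * ((n:ℝ) - μ)^2))
        = Φ (((n:ℤ) - μ).natAbs) * (Real.exp ((t' - t) * ((n:ℝ) - μ)^2) * Real.exp (t * ((n:ℝ) - μ)^2)) from by ring,
      ← Real.exp_add]
    congr 2
    ring

lemma iterate_props (μ : ℕ) (hμ : 1 ≤ μ) (c : ℝ) (Q0 : Polynomial ℂ)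
    (hdeg : Q0.natDegree = 2*μ) (hlead : Q0.coeff (2*μ) ≠ 0)
    (hroots : ∀ w : ℂ, Q0.eval w = 0 → ‖w‖ = 1) (k : ℕ) :
    ((fun Q => Tc μ c (Tc μ (-c) Q))^[k] Q0).natDegree = 2*μ
    ∧ ((fun Q => Tc μ c (Tc μ (-c) Q))^[k] Q0).coeff (2*μ) ≠ 0
    ∧ (∀ w : ℂ, ((fun Q => Tc μ c (Tc μ (-c) Q))^[k] Q0).eval w = 0 → ‖w‖ = 1)
    ∧ ∀ n : ℕ, ((fun Q => Tc μ c (Tc μ (-c) Q))^[k] Q0).coeff n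
        = (1 + (c:ℂ)^2 * ((n:ℂ) - μ)^2)^k * Q0.coeff n := by
  induction k with
  | zero => exact ⟨hdeg, hlead, hroots, fun n => by simp⟩
  | succ k ih =>
    obtain ⟨ih1, ih2, ih3, ih4⟩ := ih
    rw [Function.iterate_succ_apply']
    have s1 := Tc_step μ hμ (-c) _ ih1 ih2 ih3
    have s2 := Tc_step μ hμ c _ s1.1 s1.2.1 s1.2.2
    refine ⟨s2.1, s2.2.1, s2.2.2, fun n => ?_⟩
    rw [coeff_Tc, coeff_Tc, ih4, pow_succ]
    push_cast
    have hI : Complex.I * Complex.I = -1 := Complex.I_mul_I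
    linear_combination (-((c:ℂ))^2 * ((n:ℂ) - μ)^2 * (1 + (c:ℂ)^2*((n:ℂ)-μ)^2)^k * Q0.coeff n) * hI

/-- If for some `t` every complex zero of `Ξ_t` is real, then the same holds
for every `t' > t`. -/
theorem zeros_stay_real (g : ℕ) (hg : 1 ≤ g) (Φ : ℕ → ℝ) (t : ℝ)
    (h : ∀ z : ℂ, Xi g Φ t z = 0 → z.im = 0) :
    ∀ t' : ℝ, t < t' → ∀ z : ℂ, Xi g Φ t' z = 0 → z.im = 0 := by
  intro t' htt' z₀ hz₀
  by_contra him0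
  by_cases hall : ∀ n ∈ Finset.Icc 1 g, Φ n = 0
  · have hXi : ∀ (s : ℝ) (z : ℂ), Xi g Φ s z = (Φ 0 : ℂ) := by
      intro s z
      rw [Xi, Finset.sum_eq_zero (fun n hn => by rw [hall n hn]; simp), add_zero]
    by_cases hΦ0 : Φ 0 = 0
    · have h1 := h Complex.I (by rw [hXi, hΦ0]; simp)
      simp [Complex.I_im] at h1
    · have h2 := hz₀
      rw [hXi] at h2
      exact hΦ0 (by exact_mod_cast h2)
  · push_neg at hall
    obtain ⟨n₀, hn₀, hn₀'⟩ := hall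
    set S := (Finset.Icc 1 g).filter (fun n => Φ n ≠ 0) with hSdef
    have hS : S.Nonempty := ⟨n₀, Finset.mem_filter.mpr ⟨hn₀, hn₀'⟩⟩
    set μ := S.max' hS with hμdef
    have hμmem : μ ∈ S := by rw [hμdef]; exact S.max'_mem hS
    rw [hSdef, Finset.mem_filter, Finset.mem_Icc] at hμmem
    have hμ1 : 1 ≤ μ := hμmem.1.1
    have hμg : μ ≤ g := hμmem.1.2
    have hΦμ : Φ μ ≠ 0 := hμmem.2
    have hhigh : ∀ n, μ < n → n ≤ g → Φ n = 0 := by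
      intro n h1 h2
      by_contra hne
      have := S.le_max' n (Finset.mem_filter.mpr ⟨Finset.mem_Icc.mpr ⟨by omega, h2⟩, hne⟩)
      omega
    have hXiQ : ∀ (s : ℝ) (z : ℂ), Xi g Φ s z
        = Complex.exp (-(μ:ℂ) * Complex.I * z) * (Qp Φ μ s).eval (Complex.exp (Complex.I * z)) :=
      fun s z => Xi_eq g μ hμ1 hμg Φ hhigh s z
    have hGedge : ∀ s : ℝ, ((Φ μ * Real.exp (s * (μ:ℝ)^2) : ℝ) : ℂ) ≠ 0 := by
      intro s
      rw [Complex.ofReal_ne_zero]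
      exact mul_ne_zero hΦμ (Real.exp_ne_zero _)
    have hdeg : ∀ s : ℝ, (Qp Φ μ s).natDegree = 2*μ := by
      intro s
      have hle : (Qp Φ μ s).natDegree ≤ 2*μ :=
        Polynomial.natDegree_le_iff_coeff_eq_zero.mpr (fun N hN => by
          rw [coeff_Qp, if_neg (by omega)])
      refine le_antisymm hle (Polynomial.le_natDegree_of_ne_zero ?_)
      rw [coeff_Qp, if_pos le_rfl, (coefA_edge Φ μ hμ1 s).1]
      exact hGedge s
    have hlead : (Qp Φ μ t).coeff (2*μ) ≠ 0 := by
      rw [coeff_Qp, if_pos le_rfl, (coefA_edge Φ μ hμ1 t).1]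
      exact hGedge t
    have hroots : ∀ w : ℂ, (Qp Φ μ t).eval w = 0 → ‖w‖ = 1 := by
      intro w hw
      have hw0 : w ≠ 0 := by
        intro h0
        rw [h0, ← Polynomial.coeff_zero_eq_eval_zero, coeff_Qp, if_pos (by omega),
          (coefA_edge Φ μ hμ1 t).2] at hw
        exact hGedge t hw
      set z := -(Complex.I * Complex.log w) with hzdef
      have hIz : Complex.I * z = Complex.log w := by
        rw [hzdef]
        have hI : Complex.I * Complex.I = -1 := Complex.I_mul_I
        linear_combination (-(Complex.log w)) * hI
      have hezw : Complex.exp (Complex.I * z) = w := by rw [hIz]; exact Complex.exp_log hw0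
      have hXiz : Xi g Φ t z = 0 := by
        rw [hXiQ t z, hezw, hw, mul_zero]
      have him := h z hXiz
      have habs : ‖w‖ = Real.exp (-z.im) := by
        rw [← hezw, Complex.norm_exp]
        congr 1
        simp [Complex.mul_re]
      rw [habs, him]
      simp
    set u := t' - t with hudef
    have hu : 0 < u := sub_pos.mpr htt'
    set w₀ := Complex.exp (Complex.I * z₀) with hw₀def
    have habsw₀ : ‖w₀‖ = Real.exp (-z₀.im) := by
      rw [hw₀def, Complex.norm_exp]; congr 1; simp [Complex.mul_re]
    have hw₀1 : ‖w₀‖ ≠ 1 := by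
      rw [habsw₀]
      intro hcon
      rw [Real.exp_eq_one_iff] at hcon
      exact him0 (by linarith)
    set δ := |‖w₀‖ - 1| with hδdef
    have hδ : 0 < δ := abs_pos.mpr (sub_ne_zero.mpr hw₀1)
    have hQt' : (Qp Φ μ t').eval w₀ = 0 := by
      have h2 := hz₀
      rw [hXiQ t' z₀] at h2
      rcases mul_eq_zero.mp h2 with hcon | hok
      · exact absurd hcon (Complex.exp_ne_zero _)
      · exact hok
    set c : ℕ → ℝ := fun N => Real.sqrt (u / N) with hcdef
    have hc2 : ∀ N : ℕ, (c N)^2 = u / N := fun N =>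
      Real.sq_sqrt (div_nonneg hu.le (Nat.cast_nonneg N))
    set P : ℕ → Polynomial ℂ :=
      fun N => (fun Q => Tc μ (c N) (Tc μ (-(c N)) Q))^[N] (Qp Φ μ t) with hPdef
    have hprops : ∀ N, (P N).natDegree = 2*μ ∧ (P N).coeff (2*μ) ≠ 0
        ∧ (∀ w : ℂ, (P N).eval w = 0 → ‖w‖ = 1)
        ∧ ∀ n : ℕ, (P N).coeff n = (1 + ((c N : ℂ))^2 * ((n:ℂ) - μ)^2)^N * (Qp Φ μ t).coeff n :=
      fun N => iterate_props μ hμ1 (c N) (Qp Φ μ t) (hdeg t) hlead hroots N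
    have hcoeffP : ∀ N n, n ≤ 2*μ → (P N).coeff n
        = (((1 + (u * ((n:ℝ) - μ)^2) / N)^N : ℝ) : ℂ) * coefA Φ μ t n := by
      intro N n hn
      rw [(hprops N).2.2.2 n, coeff_Qp, if_pos hn]
      congr 1
      rw [show ((c N : ℂ))^2 = (((c N)^2 : ℝ) : ℂ) from by push_cast; ring, hc2 N]
      push_cast
      ring
    set B := ‖coefA Φ μ t (2*μ)‖ * δ^(2*μ) with hBdef
    have hB : 0 < B := by
      apply mul_pos
      · rw [(coefA_edge Φ μ hμ1 t).1]
        exact norm_pos_iff.mpr (hGedge t)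
      · positivity
    have hlower : ∀ N, B ≤ ‖(P N).eval w₀‖ := by
      intro N
      obtain ⟨hd, hl, hr, hco⟩ := hprops N
      have hsplit : Polynomial.Splits (P N) := IsAlgClosed.splits _
      have hfac := hsplit.eq_prod_roots
      have hcard : Multiset.card (P N).roots = 2*μ := by
        rw [← hd]; exact Polynomial.splits_iff_card_roots.mp hsplit
      have heval : ‖(P N).eval w₀‖
          = ‖(P N).leadingCoeff‖
              * (((P N).roots.map (fun ρ => ‖w₀ - ρ‖)).prod) := by
        conv_lhs => rw [hfac]
        rw [Polynomial.eval_mul, Polynomial.eval_C, norm_mul, Polynomial.eval_multiset_prod,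
          Multiset.map_map, abs_msum_prod, Multiset.map_map]
        congr 2
        apply Multiset.map_congr rfl
        intro ρ _
        simp
      have hprod : δ^(2*μ) ≤ ((P N).roots.map (fun ρ => ‖w₀ - ρ‖)).prod := by
        rw [← hcard]
        apply prod_lb w₀ δ hδ.le
        intro ρ hρ
        have hρ1 : ‖ρ‖ = 1 := hr ρ (Polynomial.mem_roots'.mp hρ).2
        calc δ = |‖w₀‖ - ‖ρ‖| := by rw [hρ1]
          _ ≤ ‖w₀ - ρ‖ := abs_norm_sub_norm_le w₀ ρ
      have hone : (1:ℝ) ≤ |1 + (c N)^2 * (μ:ℝ)^2| := by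
        rw [_root_.abs_of_nonneg (by positivity)]
        nlinarith [sq_nonneg (c N * (μ:ℝ))]
      have hleadlb : ‖coefA Φ μ t (2*μ)‖ ≤ ‖(P N).leadingCoeff‖ := by
        rw [Polynomial.leadingCoeff, hd, hco (2*μ)]
        rw [show ((1:ℂ) + ((c N : ℂ))^2 * (((2*μ:ℕ):ℂ) - μ)^2)
            = (((1 + (c N)^2 * (μ:ℝ)^2 : ℝ)) : ℂ) from by push_cast; ring]
        rw [norm_mul, norm_pow, Complex.norm_real, Real.norm_eq_abs, coeff_Qp, if_pos le_rfl]
        have h1 : (1:ℝ) ≤ |1 + (c N)^2 * (μ:ℝ)^2| ^ N := one_le_pow₀ hone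
        nlinarith [norm_nonneg (coefA Φ μ t (2*μ))]
      rw [heval, hBdef]
      apply mul_le_mul hleadlb hprod (by positivity)
        (norm_nonneg _)
    have hEeq : ∀ N, (P N).eval w₀
        = ∑ n ∈ Finset.range (2*μ+1),
            (((1 + (u * ((n:ℝ) - μ)^2) / N)^N : ℝ) : ℂ) * (coefA Φ μ t n * w₀^n) := by
      intro N
      rw [Polynomial.eval_eq_sum_range, (hprops N).1]
      apply Finset.sum_congr rfl
      intro n hn
      rw [Finset.mem_range] at hn
      rw [hcoeffP N n (by omega)]
      ring
    have hlim : Filter.Tendsto (fun N => (P N).eval w₀) Filter.atTop (nhds 0) := by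
      rw [show (0:ℂ) = (Qp Φ μ t').eval w₀ from hQt'.symm, eval_Qp]
      apply Filter.Tendsto.congr (fun N => (hEeq N).symm)
      apply tendsto_finset_sum
      intro n _
      have h1 : Filter.Tendsto (fun N : ℕ => ((1 + (u*((n:ℝ)-μ)^2)/N)^N : ℝ))
          Filter.atTop (nhds (Real.exp (u*((n:ℝ)-μ)^2))) := Real.tendsto_one_add_div_pow_exp _
      have h2 := ((Complex.continuous_ofReal.tendsto _).comp h1).mul_const
        (coefA Φ μ t n * w₀^n)
      have h3 : ((Real.exp (u*((n:ℝ)-μ)^2) : ℝ) : ℂ) * (coefA Φ μ t n * w₀^n)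
          = coefA Φ μ t' n * w₀^n := by
        rw [coefA_shift Φ μ t t' n, hudef]
        ring
      rw [h3] at h2
      exact h2
    have hev : ∀ᶠ N in Filter.atTop, ‖(P N).eval w₀‖ < B := by
      have h3 : Filter.Tendsto (fun N => ‖(P N).eval w₀‖)
          Filter.atTop (nhds 0) := by
        have := hlim.norm
        simpa using this
      exact h3.eventually_lt_const hB
    obtain ⟨N, hN⟩ := hev.exists
    exact absurd (hlower N) (not_le.mpr hN)
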